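/- Let A be a Banach algebra with a right identity e, and let d : A → A be a Jordan right derivation. Then d vanishes on the right annihilator: d(r) = 0 for every r ∈ ran(A). -/
import Mathlib


/-- Let `A` be a complex Banach algebra with a right identity `e`, and let
`d : A → A` be a Jordan right derivation (`d (a²) = 2 • (d a * a)`).  Then `d` vanishes on
the right annihilator `ran(A) = {x | ∀ a, a * x = 0}`. -/
theorem jordanRightDerivation_vanishes_on_rightAnnihilator
    {A : Type*} [NonUnitalNormedRing A] [NormedSpace ℂ A]
    [IsScalarTower ℂ A A] [SMulCommClass ℂ A A] [CompleteSpace A]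
    (e : A) (he : ∀ a : A, a * e = a)
    (d : A →ₗ[ℂ] A) (hd : ∀ a : A, d (a * a) = 2 • (d a * a)) :
    ∀ r : A, (∀ a : A, a * r = 0) → d r = 0 := by
  intro r hr
  have hde : d e = 0 := by
    have h1 := hd e
    rw [he, he, two_smul] at h1
    exact (left_eq_add).1 h1
  have h2 := hd (e + r)
  have hsq : (e + r) * (e + r) = e + r := by
    rw [mul_add, add_mul, add_mul, hr, hr, he, he]
    simp
  rw [hsq, map_add, hde, zero_add, mul_add, hr, add_zero, he, two_smul] at h2
  exact (left_eq_add).1 h2
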